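/- Let x̂ be the reg-mod-BPDN solution under the hypotheses of Theorem 1 applied to a subset Δ̃ ⊆ Δ (Q_{T,λ}(Δ̃) invertible, ERC_{T,λ}(Δ̃) > 0, γ = γ*_{T,λ}(Δ̃)). Then the numerator of γ* can be bounded as ‖A_{(T∪Δ̃)^c}'(y − Ac(Δ̃))‖_∞ ≤ maxcor(Δ̃)·(λf₂(Δ̃)‖x_T − μ̂_T‖₂ + f₃(Δ̃)‖w‖₂ + f₄(Δ̃)‖x_{Δ∖Δ̃}‖₂) + ‖A_{(T∪Δ̃)^c}'w‖_∞, where maxcor(Δ̃) = max_{i∉T∪Δ̃}‖A_i'A_{T∪Δ}‖₂. -/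

import Mathlib

open Matrix BigOperators Finset

noncomputable section

abbrev Idx {m : ℕ} (T : Finset (Fin m)) := {j : Fin m // j ∈ T}

/-- Submatrix of `A` consisting of the columns indexed by `T`. -/
def colsub {n m : ℕ} (A : Matrix (Fin n) (Fin m) ℝ) (T : Finset (Fin m)) :
    Matrix (Fin n) (Idx T) ℝ := Matrix.of fun i j => A i j.1

/-- Euclidean (ℓ2) norm of a finitely indexed vector. -/
def l2 {α : Type*} [Fintype α] (v : α → ℝ) : ℝ := Real.sqrt (∑ i, v i ^ 2)

/-- ℓ1 norm. -/
def l1 {α : Type*} [Fintype α] (v : α → ℝ) : ℝ := ∑ i, |v i|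

/-- ℓ∞ (sup) norm. -/
def linf {α : Type*} [Fintype α] (v : α → ℝ) : ℝ := ⨆ i, |v i|

/-- Spectral (ℓ2 operator) norm of a matrix. -/
def spec {α β : Type*} [Fintype α] [Fintype β] [DecidableEq β] (M : Matrix α β ℝ) : ℝ :=
  ‖LinearMap.toContinuousLinearMap (Matrix.toEuclideanLin M)‖

/-- `Q_{T,λ}(S) = A_{T∪S}' A_{T∪S} + λ·diag(I_T, 0_S)`. -/
def Qmat {n m : ℕ} (A : Matrix (Fin n) (Fin m) ℝ) (T S : Finset (Fin m)) (lam : ℝ) :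
    Matrix (Idx (T ∪ S)) (Idx (T ∪ S)) ℝ :=
  (colsub A (T ∪ S))ᵀ * colsub A (T ∪ S) +
    lam • (Matrix.of (fun i j => if i = j ∧ (i : Fin m) ∈ T then (1 : ℝ) else 0) :
      Matrix (Idx (T ∪ S)) (Idx (T ∪ S)) ℝ)

/-- `M_{T,λ} = I − A_T (A_T'A_T + λ I_T)⁻¹ A_T'`. -/
def Mmat {n m : ℕ} (A : Matrix (Fin n) (Fin m) ℝ) (T : Finset (Fin m)) (lam : ℝ) :
    Matrix (Fin n) (Fin n) ℝ :=
  1 - colsub A T * ((colsub A T)ᵀ * colsub A T + lam • 1)⁻¹ * (colsub A T)ᵀ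

/-- `P_{T,λ}(Δ) = (A_Δ' M A_Δ)⁻¹`. -/
def Pmat {n m : ℕ} (A : Matrix (Fin n) (Fin m) ℝ) (T Δ : Finset (Fin m)) (lam : ℝ) :
    Matrix (Idx Δ) (Idx Δ) ℝ :=
  ((colsub A Δ)ᵀ * Mmat A T lam * colsub A Δ)⁻¹

/-- The regularized least-squares estimate supported on `T ∪ S`:
`c_{T∪S} = Q⁻¹ (A_{T∪S}' y + [λμ̂_T ; 0_S])`, zero outside `T ∪ S`. -/
def cvec {n m : ℕ} (A : Matrix (Fin n) (Fin m) ℝ) (T S : Finset (Fin m)) (lam : ℝ)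
    (y : Fin n → ℝ) (μ : Fin m → ℝ) : Fin m → ℝ :=
  fun i => if h : i ∈ T ∪ S then
    (Qmat A T S lam)⁻¹.mulVec
      (fun j => (∑ k, A k j.1 * y k) + (if (j : Fin m) ∈ T then lam * μ j.1 else 0)) ⟨i, h⟩
  else 0

/-- The reg-mod-BPDN objective
`L(b) = γ‖b_{T^c}‖₁ + (1/2)‖y − Ab‖₂² + (λ/2)‖b_T − μ̂_T‖₂²`. -/
def Lobj {n m : ℕ} (A : Matrix (Fin n) (Fin m) ℝ) (T : Finset (Fin m)) (γ lam : ℝ)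
    (y : Fin n → ℝ) (μ : Fin m → ℝ) (b : Fin m → ℝ) : ℝ :=
  γ * (∑ i ∈ Tᶜ, |b i|) + (1/2) * (∑ i, (y i - A.mulVec b i) ^ 2) +
    (lam/2) * (∑ i ∈ T, (b i - μ i) ^ 2)

/-- The quadratic part `L₁(b) = (1/2)‖y − Ab‖₂² + (λ/2)‖b_T − μ̂_T‖₂²`. -/
def L1obj {n m : ℕ} (A : Matrix (Fin n) (Fin m) ℝ) (T : Finset (Fin m)) (lam : ℝ)
    (y : Fin n → ℝ) (μ : Fin m → ℝ) (b : Fin m → ℝ) : ℝ :=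
  (1/2) * (∑ i, (y i - A.mulVec b i) ^ 2) + (lam/2) * (∑ i ∈ T, (b i - μ i) ^ 2)

/-- `ERC_{T,λ}(Δ) = 1 − max_{ω∉T∪Δ} ‖P(Δ) A_Δ' M A_ω‖₁`. -/
def ERC {n m : ℕ} (A : Matrix (Fin n) (Fin m) ℝ) (T Δ : Finset (Fin m)) (lam : ℝ) : ℝ :=
  1 - ⨆ ω : Idx ((T ∪ Δ)ᶜ),
    l1 ((Pmat A T Δ lam * (colsub A Δ)ᵀ * Mmat A T lam).mulVec (fun i => A i ω.1))

/-- `f₁(Δ)`. -/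
def f1 {n m : ℕ} (A : Matrix (Fin n) (Fin m) ℝ) (T Δ : Finset (Fin m)) (lam : ℝ) : ℝ :=
  Real.sqrt
    (spec (((colsub A T)ᵀ * colsub A T + lam • 1)⁻¹ * (colsub A T)ᵀ * colsub A Δ *
        Pmat A T Δ lam) ^ 2 + spec (Pmat A T Δ lam) ^ 2)

/-- `f₂(Δ) = ‖Q⁻¹‖₂`. -/
def f2 {n m : ℕ} (A : Matrix (Fin n) (Fin m) ℝ) (T Δ : Finset (Fin m)) (lam : ℝ) : ℝ :=
  spec ((Qmat A T Δ lam)⁻¹)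

/-- `f₃(Δ) = ‖Q⁻¹ A_{T∪Δ}'‖₂`. -/
def f3 {n m : ℕ} (A : Matrix (Fin n) (Fin m) ℝ) (T Δ : Finset (Fin m)) (lam : ℝ) : ℝ :=
  spec ((Qmat A T Δ lam)⁻¹ * (colsub A (T ∪ Δ))ᵀ)

/-- `f₄(Δ̃) = sqrt(‖Q(Δ̃)⁻¹ A_{T∪Δ̃}' A_{Δ∖Δ̃}‖₂² + 1)`. -/
def f4 {n m : ℕ} (A : Matrix (Fin n) (Fin m) ℝ) (T Δ Δt : Finset (Fin m)) (lam : ℝ) : ℝ :=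
  Real.sqrt
    (spec ((Qmat A T Δt lam)⁻¹ * (colsub A (T ∪ Δt))ᵀ * colsub A (Δ \ Δt)) ^ 2 + 1)

/-- Numerator of `γ*`: `‖A_{(T∪Δ)^c}'(y − A c(Δ))‖_∞`. -/
def gammaNum {n m : ℕ} (A : Matrix (Fin n) (Fin m) ℝ) (T Δ : Finset (Fin m)) (lam : ℝ)
    (y : Fin n → ℝ) (μ : Fin m → ℝ) : ℝ :=
  linf (fun j : Idx ((T ∪ Δ)ᶜ) =>
    ∑ i, A i j.1 * (y i - A.mulVec (cvec A T Δ lam y μ) i))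

/-- `γ*_{T,λ}(Δ)`. -/
def gammaStar {n m : ℕ} (A : Matrix (Fin n) (Fin m) ℝ) (T Δ : Finset (Fin m)) (lam : ℝ)
    (y : Fin n → ℝ) (μ : Fin m → ℝ) : ℝ :=
  gammaNum A T Δ lam y μ / ERC A T Δ lam



/-! ### Auxiliary lemmas -/

lemma aux_l2_eq {α : Type*} [Fintype α] (v : α → ℝ) :
    l2 v = ‖(WithLp.equiv 2 (α → ℝ)).symm v‖ := by
  rw [EuclideanSpace.norm_eq]; simp [l2, sq_abs]

lemma aux_l2_nonneg {α : Type*} [Fintype α] (v : α → ℝ) : 0 ≤ l2 v := Real.sqrt_nonneg _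

lemma aux_l2_sq {α : Type*} [Fintype α] (v : α → ℝ) : l2 v ^ 2 = ∑ i, v i ^ 2 :=
  Real.sq_sqrt (Finset.sum_nonneg fun i _ => sq_nonneg _)

lemma aux_spec_nonneg {α β : Type*} [Fintype α] [Fintype β] [DecidableEq β]
    (M : Matrix α β ℝ) : 0 ≤ spec M := norm_nonneg _

lemma aux_l2_mulVec_le {α β : Type*} [Fintype α] [Fintype β] [DecidableEq α] [DecidableEq β]
    (M : Matrix α β ℝ) (v : β → ℝ) : l2 (M.mulVec v) ≤ spec M * l2 v := by
  rw [aux_l2_eq, aux_l2_eq]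
  have h : (Matrix.toEuclideanLin M) ((WithLp.equiv 2 (β → ℝ)).symm v)
      = (WithLp.equiv 2 (α → ℝ)).symm (M.mulVec v) := by
    simp [Matrix.toEuclideanLin_apply_piLp_toLp]
  rw [← h]
  exact (LinearMap.toContinuousLinearMap (Matrix.toEuclideanLin M)).le_opNorm _

lemma aux_l2_add_le {α : Type*} [Fintype α] (u v : α → ℝ) :
    l2 (fun i => u i + v i) ≤ l2 u + l2 v := by
  rw [aux_l2_eq, aux_l2_eq, aux_l2_eq]
  have := norm_add_le ((WithLp.equiv 2 (α → ℝ)).symm u) ((WithLp.equiv 2 (α → ℝ)).symm v)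
  exact this

lemma aux_l2_neg {α : Type*} [Fintype α] (v : α → ℝ) : l2 (fun i => -v i) = l2 v := by
  unfold l2; congr 1; exact Finset.sum_congr rfl fun i _ => by ring

lemma aux_l2_smul {α : Type*} [Fintype α] (c : ℝ) (v : α → ℝ) (hc : 0 ≤ c) :
    l2 (fun i => c * v i) = c * l2 v := by
  rw [aux_l2_eq, aux_l2_eq]
  have h : (WithLp.equiv 2 (α → ℝ)).symm (fun i => c * v i)
      = c • (WithLp.equiv 2 (α → ℝ)).symm v := by
    ext i; simp
  rw [h, norm_smul]; simp [abs_of_nonneg hc]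

lemma aux_cauchy {α : Type*} [Fintype α] (u v : α → ℝ) :
    |∑ i, u i * v i| ≤ l2 u * l2 v := by
  rw [aux_l2_eq, aux_l2_eq]
  have h : (∑ i, u i * v i) =
      inner ℝ ((WithLp.equiv 2 (α → ℝ)).symm u) ((WithLp.equiv 2 (α → ℝ)).symm v) := by
    rw [PiLp.inner_apply]; simp [RCLike.inner_apply, mul_comm]
  rw [h]; exact abs_real_inner_le_norm _ _

lemma aux_l2_sub3_le {α : Type*} [Fintype α] (a b c : α → ℝ) :
    l2 (fun i => a i - b i - c i) ≤ l2 a + l2 b + l2 c := by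
  have e1 : (fun i => a i - b i - c i) = (fun i => (a i + -b i) + -c i) := by
    funext i; ring
  rw [e1]
  refine le_trans (aux_l2_add_le _ _) ?_
  rw [aux_l2_neg]
  have h2 := aux_l2_add_le a (fun i => -b i)
  rw [aux_l2_neg] at h2
  linarith

lemma aux_combine (t sA sB cM r0 f4v : ℝ) (ht : 0 ≤ t) (hr0 : 0 ≤ r0) (hcM : 0 ≤ cM)
    (hA : 0 ≤ sA) (hAle : Real.sqrt sA ≤ t + cM * r0) (hB : sB = r0 ^ 2)
    (hf4 : f4v = Real.sqrt (cM ^ 2 + 1)) :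
    Real.sqrt (sA + sB) ≤ t + f4v * r0 := by
  have hf40 : 0 ≤ f4v := hf4 ▸ Real.sqrt_nonneg _
  have hf4sq : f4v ^ 2 = cM ^ 2 + 1 := by rw [hf4]; exact Real.sq_sqrt (by positivity)
  have hcMle : cM ≤ f4v := by
    rw [hf4]
    calc cM = Real.sqrt (cM ^ 2) := (Real.sqrt_sq hcM).symm
      _ ≤ _ := Real.sqrt_le_sqrt (by linarith)
  have hG0 : 0 ≤ t + f4v * r0 := by positivity
  have haB : sA ≤ (t + cM * r0) ^ 2 := by
    calc sA = Real.sqrt sA ^ 2 := (Real.sq_sqrt hA).symm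
      _ ≤ (t + cM * r0) ^ 2 := pow_le_pow_left₀ (Real.sqrt_nonneg _) hAle 2
  refine le_trans (Real.sqrt_le_sqrt ?_) (le_of_eq (Real.sqrt_sq hG0))
  nlinarith [mul_nonneg (mul_nonneg ht hr0) (sub_nonneg.mpr hcMle)]

/-- bound on the numerator of `γ*` for `Δ̃ ⊆ Δ`:
`‖A_{(T∪Δ̃)^c}'(y−Ac(Δ̃))‖_∞ ≤ maxcor(Δ̃)(λf₂‖x_T−μ̂_T‖₂ + f₃‖w‖₂ + f₄‖x_{Δ∖Δ̃}‖₂)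
 + ‖A_{(T∪Δ̃)^c}'w‖_∞`. -/
theorem stmt19 {n m : ℕ} (A : Matrix (Fin n) (Fin m) ℝ) (T Δ Δt : Finset (Fin m))
    (hTΔ : Disjoint T Δ) (hsub : Δt ⊆ Δ) (lam γ : ℝ) (hlam : 0 ≤ lam)
    (x : Fin m → ℝ) (w y : Fin n → ℝ) (μ : Fin m → ℝ)
    (hx : ∀ i ∉ T ∪ Δ, x i = 0)
    (hy : y = fun i => A.mulVec x i + w i)
    (hQ : IsUnit (Qmat A T Δt lam)) (hERC : 0 < ERC A T Δt lam)
    (hγ : γ = gammaStar A T Δt lam y μ) :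
    linf (fun j : Idx ((T ∪ Δt)ᶜ) =>
        ∑ i, A i j.1 * (y i - A.mulVec (cvec A T Δt lam y μ) i)) ≤
      (⨆ i : Idx ((T ∪ Δt)ᶜ), l2 (fun j : Idx (T ∪ Δ) => ∑ k, A k i.1 * A k j.1)) *
        (lam * f2 A T Δt lam * l2 (fun j : Idx T => x j.1 - μ j.1) +
          f3 A T Δt lam * l2 w +
          f4 A T Δ Δt lam * l2 (fun j : Idx (Δ \ Δt) => x j.1)) +
      linf (fun j : Idx ((T ∪ Δt)ᶜ) => ∑ i, A i j.1 * w i) := by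
  classical
  set c : Fin m → ℝ := cvec A T Δt lam y μ with hc
  have hFdec : T ∪ Δ = (T ∪ Δt) ∪ (Δ \ Δt) := by
    ext i
    simp only [Finset.mem_union, Finset.mem_sdiff]
    constructor
    · rintro (h | h)
      · exact Or.inl (Or.inl h)
      · by_cases h2 : i ∈ Δt
        · exact Or.inl (Or.inr h2)
        · exact Or.inr ⟨h, h2⟩
    · rintro ((h | h) | ⟨h, _⟩)
      · exact Or.inl h
      · exact Or.inr (hsub h)
      · exact Or.inr h
  have hdisj : Disjoint (T ∪ Δt) (Δ \ Δt) := by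
    rw [Finset.disjoint_left]
    intro i hi hi2
    rcases Finset.mem_union.mp hi with h | h
    · exact Finset.disjoint_left.mp hTΔ h (Finset.mem_sdiff.mp hi2).1
    · exact (Finset.mem_sdiff.mp hi2).2 h
  have hST : T ∪ Δt ⊆ T ∪ Δ := by rw [hFdec]; exact Finset.subset_union_left
  have hczero : ∀ i, i ∉ T ∪ Δt → c i = 0 := by
    intro i hi; simp [hc, cvec, hi]
  set e : Idx (T ∪ Δt) → ℝ := fun p => if (p : Fin m) ∈ T then x p.1 - μ p.1 else 0 with he
  set u2 : Idx (T ∪ Δt) → ℝ := fun p => ∑ k, A k p.1 * w k with hu2def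
  set u3 : Idx (T ∪ Δt) → ℝ :=
    fun p => ∑ q : Idx (Δ \ Δt), (∑ k, A k p.1 * A k q.1) * x q.1 with hu3def
  have hQmulx : ∀ jj : Idx (T ∪ Δt),
      (Qmat A T Δt lam).mulVec (fun p : Idx (T ∪ Δt) => x p.1) jj
        = (∑ p : Idx (T ∪ Δt), (∑ k, A k jj.1 * A k p.1) * x p.1)
          + lam * (if (jj : Fin m) ∈ T then x jj.1 else 0) := by
    intro jj
    simp only [Qmat]
    rw [Matrix.add_mulVec, Pi.add_apply, Matrix.smul_mulVec, Pi.smul_apply,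
      smul_eq_mul]
    congr 1
    all_goals by_cases h : (jj : Fin m) ∈ T <;>
      simp [Matrix.mulVec, Matrix.mul_apply, dotProduct, colsub, Matrix.transpose_apply,
        Matrix.of_apply, h, Finset.sum_mul]
  have hycomp : ∀ jj : Idx (T ∪ Δt),
      (∑ k, A k jj.1 * y k)
        = (∑ p : Idx (T ∪ Δt), (∑ k, A k jj.1 * A k p.1) * x p.1)
          + (∑ q : Idx (Δ \ Δt), (∑ k, A k jj.1 * A k q.1) * x q.1)
          + (∑ k, A k jj.1 * w k) := by
    intro jj
    have h1 : (∑ k, A k jj.1 * y k)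
        = (∑ l, (∑ k, A k jj.1 * A k l) * x l) + ∑ k, A k jj.1 * w k := by
      rw [hy]
      have h0 : (∑ k, A k jj.1 * (A.mulVec x k + w k))
          = (∑ k, A k jj.1 * A.mulVec x k) + ∑ k, A k jj.1 * w k := by
        rw [← Finset.sum_add_distrib]; exact Finset.sum_congr rfl fun k _ => by ring
      rw [h0]
      congr 1
      calc ∑ k, A k jj.1 * A.mulVec x k
          = ∑ k, ∑ l, A k jj.1 * A k l * x l := by
            refine Finset.sum_congr rfl fun k _ => ?_
            rw [Matrix.mulVec, dotProduct, Finset.mul_sum]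
            exact Finset.sum_congr rfl fun l _ => by ring
        _ = ∑ l, ∑ k, A k jj.1 * A k l * x l := Finset.sum_comm
        _ = ∑ l, (∑ k, A k jj.1 * A k l) * x l := by
            refine Finset.sum_congr rfl fun l _ => ?_
            rw [Finset.sum_mul]
    have h2 : (∑ l, (∑ k, A k jj.1 * A k l) * x l)
        = ∑ l ∈ T ∪ Δ, (∑ k, A k jj.1 * A k l) * x l := by
      refine (Finset.sum_subset (Finset.subset_univ _) ?_).symm
      intro i _ hi
      rw [hx i hi, mul_zero]
    rw [h1, h2, hFdec, Finset.sum_union hdisj,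
      ← Finset.sum_coe_sort (T ∪ Δt) (fun l => (∑ k, A k jj.1 * A k l) * x l),
      ← Finset.sum_coe_sort (Δ \ Δt) (fun l => (∑ k, A k jj.1 * A k l) * x l)]
  have hrv : ∀ jj : Idx (T ∪ Δt),
      ((Qmat A T Δt lam).mulVec (fun p : Idx (T ∪ Δt) => x p.1)
        - fun j : Idx (T ∪ Δt) =>
            (∑ k, A k j.1 * y k) + (if (j : Fin m) ∈ T then lam * μ j.1 else 0)) jj
        = lam * e jj - u2 jj - u3 jj := by
    intro jj
    rw [Pi.sub_apply, hQmulx jj, hycomp jj]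
    by_cases h : (jj : Fin m) ∈ T
    · simp only [he, hu2def, hu3def, h, if_true]; ring
    · simp only [he, hu2def, hu3def, h, if_false]; ring
  have hQinv : (Qmat A T Δt lam)⁻¹ * Qmat A T Δt lam = 1 :=
    Matrix.nonsing_inv_mul _ ((Matrix.isUnit_iff_isUnit_det _).mp hQ)
  have hxrec : (Qmat A T Δt lam)⁻¹.mulVec
      ((Qmat A T Δt lam).mulVec (fun p : Idx (T ∪ Δt) => x p.1))
      = fun p : Idx (T ∪ Δt) => x p.1 := by
    rw [Matrix.mulVec_mulVec, hQinv, Matrix.one_mulVec]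
  have hcval : ∀ p : Idx (T ∪ Δt),
      c p.1 = (Qmat A T Δt lam)⁻¹.mulVec
        (fun j : Idx (T ∪ Δt) =>
          (∑ k, A k j.1 * y k) + (if (j : Fin m) ∈ T then lam * μ j.1 else 0)) p := by
    intro p
    simp only [hc, cvec, p.2, dif_pos]
  have hkey : (fun p : Idx (T ∪ Δt) => x p.1 - c p.1)
      = (Qmat A T Δt lam)⁻¹.mulVec (fun p => lam * e p - u2 p - u3 p) := by
    have h1 : (fun p : Idx (T ∪ Δt) => lam * e p - u2 p - u3 p)
        = (Qmat A T Δt lam).mulVec (fun p : Idx (T ∪ Δt) => x p.1)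
          - fun j : Idx (T ∪ Δt) =>
              (∑ k, A k j.1 * y k) + (if (j : Fin m) ∈ T then lam * μ j.1 else 0) := by
      funext q; rw [← hrv q]
    rw [h1, Matrix.mulVec_sub, hxrec]
    funext p
    rw [Pi.sub_apply, hcval p]
  have hu2m : u2 = ((colsub A (T ∪ Δt))ᵀ).mulVec w := by
    funext p
    simp [hu2def, Matrix.mulVec, dotProduct, colsub, Matrix.transpose_apply]
  have hu3m : u3 = ((colsub A (T ∪ Δt))ᵀ * colsub A (Δ \ Δt)).mulVec
      (fun q : Idx (Δ \ Δt) => x q.1) := by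
    funext p
    simp [hu3def, Matrix.mulVec, dotProduct, colsub, Matrix.mul_apply,
      Matrix.transpose_apply]
  have hb1 : l2 ((Qmat A T Δt lam)⁻¹.mulVec (fun p => lam * e p))
      ≤ lam * f2 A T Δt lam * l2 (fun j : Idx T => x j.1 - μ j.1) := by
    have h1 : (Qmat A T Δt lam)⁻¹.mulVec (fun p => lam * e p)
        = fun p => lam * (Qmat A T Δt lam)⁻¹.mulVec e p := by
      have h0 : (fun p : Idx (T ∪ Δt) => lam * e p) = lam • e := rfl
      rw [h0, Matrix.mulVec_smul]; rfl
    rw [h1, aux_l2_smul _ _ hlam]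
    have h3 : l2 ((Qmat A T Δt lam)⁻¹.mulVec e) ≤ f2 A T Δt lam * l2 e :=
      aux_l2_mulVec_le _ _
    have h4 : l2 e = l2 (fun j : Idx T => x j.1 - μ j.1) := by
      unfold l2
      congr 1
      have e1 : (∑ p : Idx (T ∪ Δt), e p ^ 2)
          = ∑ i ∈ T ∪ Δt, (if i ∈ T then x i - μ i else 0) ^ 2 := by
        simp only [he]
        exact Finset.sum_coe_sort (T ∪ Δt) (fun i => (if i ∈ T then x i - μ i else 0) ^ 2)
      calc (∑ p : Idx (T ∪ Δt), e p ^ 2)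
          = ∑ i ∈ T ∪ Δt, (if i ∈ T then x i - μ i else 0) ^ 2 := e1
        _ = ∑ i ∈ T ∪ Δt, (if i ∈ T then (x i - μ i) ^ 2 else 0) :=
            Finset.sum_congr rfl fun i _ => by by_cases h : i ∈ T <;> simp [h]
        _ = ∑ i ∈ (T ∪ Δt) ∩ T, (x i - μ i) ^ 2 := Finset.sum_ite_mem _ _ _
        _ = ∑ i ∈ T, (x i - μ i) ^ 2 := by rw [Finset.union_inter_cancel_left]
        _ = ∑ j : Idx T, (x j.1 - μ j.1) ^ 2 :=
            (Finset.sum_coe_sort T (fun i => (x i - μ i) ^ 2)).symm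
    calc lam * l2 ((Qmat A T Δt lam)⁻¹.mulVec e)
        ≤ lam * (f2 A T Δt lam * l2 e) := mul_le_mul_of_nonneg_left h3 hlam
      _ = lam * f2 A T Δt lam * l2 (fun j : Idx T => x j.1 - μ j.1) := by rw [h4]; ring
  have hb2 : l2 ((Qmat A T Δt lam)⁻¹.mulVec u2) ≤ f3 A T Δt lam * l2 w := by
    rw [hu2m, Matrix.mulVec_mulVec]
    exact aux_l2_mulVec_le _ _
  have hb3 : l2 ((Qmat A T Δt lam)⁻¹.mulVec u3)
      ≤ spec ((Qmat A T Δt lam)⁻¹ * (colsub A (T ∪ Δt))ᵀ * colsub A (Δ \ Δt))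
        * l2 (fun q : Idx (Δ \ Δt) => x q.1) := by
    rw [hu3m, Matrix.mulVec_mulVec, ← Matrix.mul_assoc]
    exact aux_l2_mulVec_le _ _
  have hblock1 : l2 (fun p : Idx (T ∪ Δt) => x p.1 - c p.1)
      ≤ (lam * f2 A T Δt lam * l2 (fun j : Idx T => x j.1 - μ j.1)
          + f3 A T Δt lam * l2 w)
        + spec ((Qmat A T Δt lam)⁻¹ * (colsub A (T ∪ Δt))ᵀ * colsub A (Δ \ Δt))
          * l2 (fun q : Idx (Δ \ Δt) => x q.1) := by
    rw [hkey]
    have hlin : (Qmat A T Δt lam)⁻¹.mulVec (fun p => lam * e p - u2 p - u3 p)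
        = fun p => (Qmat A T Δt lam)⁻¹.mulVec (fun q => lam * e q) p
          - (Qmat A T Δt lam)⁻¹.mulVec u2 p - (Qmat A T Δt lam)⁻¹.mulVec u3 p := by
      have h1 : (fun p : Idx (T ∪ Δt) => lam * e p - u2 p - u3 p)
          = (fun q : Idx (T ∪ Δt) => lam * e q) - u2 - u3 := rfl
      rw [h1, Matrix.mulVec_sub, Matrix.mulVec_sub]; rfl
    rw [hlin]
    refine le_trans (aux_l2_sub3_le _ _ _) ?_
    exact add_le_add (add_le_add hb1 hb2) hb3
  have hsum : (∑ p : Idx (T ∪ Δ), (x p.1 - c p.1) ^ 2)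
      = (∑ p : Idx (T ∪ Δt), (x p.1 - c p.1) ^ 2)
        + ∑ q : Idx (Δ \ Δt), (x q.1) ^ 2 := by
    have hsA : (∑ p : Idx (T ∪ Δ), (x p.1 - c p.1) ^ 2)
        = ∑ i ∈ T ∪ Δ, (x i - c i) ^ 2 :=
      Finset.sum_coe_sort (T ∪ Δ) (fun i => (x i - c i) ^ 2)
    have hsB : (∑ p : Idx (T ∪ Δt), (x p.1 - c p.1) ^ 2)
        = ∑ i ∈ T ∪ Δt, (x i - c i) ^ 2 :=
      Finset.sum_coe_sort (T ∪ Δt) (fun i => (x i - c i) ^ 2)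
    have hsC : (∑ q : Idx (Δ \ Δt), (x q.1) ^ 2)
        = ∑ i ∈ Δ \ Δt, (x i) ^ 2 :=
      Finset.sum_coe_sort (Δ \ Δt) (fun i => (x i) ^ 2)
    rw [hsA, hsB, hsC, hFdec, Finset.sum_union hdisj]
    congr 1
    refine Finset.sum_congr rfl fun i hi => ?_
    rw [hczero i (Finset.disjoint_right.mp hdisj hi)]
    ring
  have hD : l2 (fun p : Idx (T ∪ Δ) => x p.1 - c p.1)
      ≤ lam * f2 A T Δt lam * l2 (fun j : Idx T => x j.1 - μ j.1)
        + f3 A T Δt lam * l2 w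
        + f4 A T Δ Δt lam * l2 (fun j : Idx (Δ \ Δt) => x j.1) := by
    have hf2n : 0 ≤ f2 A T Δt lam := aux_spec_nonneg _
    have hf3n : 0 ≤ f3 A T Δt lam := aux_spec_nonneg _
    have ht : 0 ≤ lam * f2 A T Δt lam * l2 (fun j : Idx T => x j.1 - μ j.1)
        + f3 A T Δt lam * l2 w :=
      add_nonneg (mul_nonneg (mul_nonneg hlam hf2n) (aux_l2_nonneg _))
        (mul_nonneg hf3n (aux_l2_nonneg _))
    calc l2 (fun p : Idx (T ∪ Δ) => x p.1 - c p.1)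
        = Real.sqrt ((∑ p : Idx (T ∪ Δt), (x p.1 - c p.1) ^ 2)
            + ∑ q : Idx (Δ \ Δt), (x q.1) ^ 2) := congrArg Real.sqrt hsum
      _ ≤ _ := by
          refine aux_combine _ _ _ _ _ _ ht (aux_l2_nonneg _) (aux_spec_nonneg _)
            (Finset.sum_nonneg fun i _ => sq_nonneg _) hblock1
            (aux_l2_sq _).symm rfl
  have hrepr : ∀ j : Idx ((T ∪ Δt)ᶜ),
      (∑ i, A i j.1 * (y i - A.mulVec c i))
        = (∑ p : Idx (T ∪ Δ), (∑ k, A k j.1 * A k p.1) * (x p.1 - c p.1))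
          + ∑ i, A i j.1 * w i := by
    intro j
    have h1 : ∀ i, y i - A.mulVec c i = (∑ l, A i l * (x l - c l)) + w i := by
      intro i
      rw [hy]
      simp only [Matrix.mulVec, dotProduct]
      have h0 : (∑ l, A i l * (x l - c l)) = (∑ l, A i l * x l) - ∑ l, A i l * c l := by
        rw [← Finset.sum_sub_distrib]; exact Finset.sum_congr rfl fun l _ => by ring
      rw [h0]; ring
    calc ∑ i, A i j.1 * (y i - A.mulVec c i)
        = ∑ i, A i j.1 * ((∑ l, A i l * (x l - c l)) + w i) :=
          Finset.sum_congr rfl fun i _ => by rw [h1 i]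
      _ = (∑ l, (∑ i, A i j.1 * A i l) * (x l - c l)) + ∑ i, A i j.1 * w i := by
          have h2 : ∀ i, A i j.1 * ((∑ l, A i l * (x l - c l)) + w i)
              = (∑ l, A i j.1 * A i l * (x l - c l)) + A i j.1 * w i := fun i => by
            rw [mul_add, Finset.mul_sum]
            congr 1
            exact Finset.sum_congr rfl fun l _ => by ring
          rw [Finset.sum_congr rfl fun i _ => h2 i, Finset.sum_add_distrib]
          congr 1
          rw [Finset.sum_comm]
          exact Finset.sum_congr rfl fun l _ => by rw [Finset.sum_mul]
      _ = (∑ l ∈ T ∪ Δ, (∑ i, A i j.1 * A i l) * (x l - c l)) + ∑ i, A i j.1 * w i := by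
          congr 1
          refine (Finset.sum_subset (Finset.subset_univ _) ?_).symm
          intro i _ hi
          rw [hx i hi, hczero i (fun hmem => hi (hST hmem))]
          ring
      _ = (∑ p : Idx (T ∪ Δ), (∑ k, A k j.1 * A k p.1) * (x p.1 - c p.1))
            + ∑ i, A i j.1 * w i := by
          congr 1
          exact (Finset.sum_coe_sort (T ∪ Δ)
            (fun l => (∑ k, A k j.1 * A k l) * (x l - c l))).symm
  by_cases hne : Nonempty (Idx ((T ∪ Δt)ᶜ))
  · refine ciSup_le fun j => ?_
    show |∑ i, A i j.1 * (y i - A.mulVec c i)| ≤ _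
    rw [hrepr j]
    refine le_trans (abs_add_le _ _) (add_le_add ?_ ?_)
    · refine le_trans (aux_cauchy _ _) ?_
      have hmax : l2 (fun p : Idx (T ∪ Δ) => ∑ k, A k j.1 * A k p.1)
          ≤ ⨆ i : Idx ((T ∪ Δt)ᶜ), l2 (fun p : Idx (T ∪ Δ) => ∑ k, A k i.1 * A k p.1) :=
        le_ciSup (f := fun i : Idx ((T ∪ Δt)ᶜ) =>
          l2 (fun p : Idx (T ∪ Δ) => ∑ k, A k i.1 * A k p.1))
          (Set.Finite.bddAbove (Set.finite_range _)) j
      exact mul_le_mul hmax hD (aux_l2_nonneg _) (le_trans (aux_l2_nonneg _) hmax)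
    · exact le_ciSup (f := fun j : Idx ((T ∪ Δt)ᶜ) => |∑ i, A i j.1 * w i|)
        (Set.Finite.bddAbove (Set.finite_range _)) j
  · have hemp : IsEmpty (Idx ((T ∪ Δt)ᶜ)) := not_nonempty_iff.mp hne
    have z1 : linf (fun j : Idx ((T ∪ Δt)ᶜ) =>
        ∑ i, A i j.1 * (y i - A.mulVec c i)) = 0 := by
      simp [linf, iSup, Set.range_eq_empty, Real.sSup_empty]
    have z2 : (⨆ i : Idx ((T ∪ Δt)ᶜ),
        l2 (fun j : Idx (T ∪ Δ) => ∑ k, A k i.1 * A k j.1)) = 0 := by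
      simp [iSup, Set.range_eq_empty, Real.sSup_empty]
    have z3 : linf (fun j : Idx ((T ∪ Δt)ᶜ) => ∑ i, A i j.1 * w i) = 0 := by
      simp [linf, iSup, Set.range_eq_empty, Real.sSup_empty]
    rw [z1, z2, z3]
    simp
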